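/- Let y ∈ ℝ³ be a row vector and T a 3×3 real matrix. Then the supremum over all pairs of unit vectors k, ℓ ∈ ℝ³ of Tr(yᵀy·ℓᵀℓ + T ℓᵀℓ Tᵀ · kᵀk) equals the largest eigenvalue of the real symmetric matrix yᵀy + TᵀT. (This gives the two-sided geometric measure for a two-qubit state whose marginal on the measured first subsystem is maximally mixed, i.e. x = 0: G = (1/4)[‖y‖² + ‖T‖²_F − λ_max(yᵀy + TᵀT)].) -/

import Mathlib

open Matrix


private lemma tr_vv (a b c d : Fin 3 → ℝ) :
    Matrix.trace (vecMulVec a b * vecMulVec c d) = (b ⬝ᵥ c) * (d ⬝ᵥ a) := by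
  simp only [trace, diag_apply, mul_apply, vecMulVec_apply, dotProduct, Finset.sum_mul_sum]
  rw [Finset.sum_comm]
  congr 1; ext j; congr 1; ext i; ring

private lemma tvt (T : Matrix (Fin 3) (Fin 3) ℝ) (ℓ : Fin 3 → ℝ) :
    T * vecMulVec ℓ ℓ * Tᵀ = vecMulVec (T *ᵥ ℓ) (T *ᵥ ℓ) := by
  ext i j
  simp only [mul_apply, vecMulVec_apply, mulVec, dotProduct, transpose_apply,
    Finset.sum_mul_sum, Finset.sum_mul, Finset.mul_sum]
  congr 1; ext k; congr 1; ext m; ring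

private lemma trace_eq (y : Fin 3 → ℝ) (T : Matrix (Fin 3) (Fin 3) ℝ) (k ℓ : Fin 3 → ℝ) :
    Matrix.trace (vecMulVec y y * vecMulVec ℓ ℓ + T * vecMulVec ℓ ℓ * Tᵀ * vecMulVec k k)
      = (y ⬝ᵥ ℓ) ^ 2 + ((T *ᵥ ℓ) ⬝ᵥ k) ^ 2 := by
  rw [trace_add, tvt, tr_vv, tr_vv, dotProduct_comm ℓ y, dotProduct_comm k (T *ᵥ ℓ)]
  ring

private lemma quad (y : Fin 3 → ℝ) (T : Matrix (Fin 3) (Fin 3) ℝ) (ℓ : Fin 3 → ℝ) :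
    ℓ ⬝ᵥ ((vecMulVec y y + Tᵀ * T) *ᵥ ℓ) = (y ⬝ᵥ ℓ) ^ 2 + (T *ᵥ ℓ) ⬝ᵥ (T *ᵥ ℓ) := by
  rw [add_mulVec, dotProduct_add, ← mulVec_mulVec, dotProduct_mulVec ℓ Tᵀ, vecMul_transpose]
  congr 1
  simp only [mulVec, vecMulVec_apply, dotProduct, sq, Finset.sum_mul, Finset.mul_sum]
  congr 1; ext i; congr 1; ext j; ring

private lemma rayleigh_le {A : Matrix (Fin 3) (Fin 3) ℝ} (hA : A.IsHermitian) {lam : ℝ}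
    (hub : ∀ i, hA.eigenvalues i ≤ lam) {ℓ : Fin 3 → ℝ} (hℓ : ℓ ⬝ᵥ ℓ = 1) :
    ℓ ⬝ᵥ (A *ᵥ ℓ) ≤ lam := by
  set U : Matrix (Fin 3) (Fin 3) ℝ := (hA.eigenvectorUnitary : Matrix (Fin 3) (Fin 3) ℝ) with hU
  have hstar : star U = Uᵀ := by
    ext i j; simp [conjTranspose_apply]
  have hUU : U * Uᵀ = 1 := by
    rw [← hstar]
    exact (mem_unitaryGroup_iff).mp hA.eigenvectorUnitary.2
  set w : Fin 3 → ℝ := Uᵀ *ᵥ ℓ with hw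
  have hdiag : diagonal ((RCLike.ofReal ∘ hA.eigenvalues) : Fin 3 → ℝ) = diagonal hA.eigenvalues := by
    congr 1
  have h1 : ℓ ⬝ᵥ (A *ᵥ ℓ) = w ⬝ᵥ (diagonal hA.eigenvalues *ᵥ w) := by
    conv_lhs => rw [hA.spectral_theorem]
    rw [Unitary.conjStarAlgAut_apply, ← hU, hstar, hdiag, ← mulVec_mulVec, ← mulVec_mulVec, dotProduct_mulVec ℓ U,
      ← transpose_transpose U, vecMul_transpose, transpose_transpose, ← hw,
      dotProduct_mulVec w (diagonal hA.eigenvalues)]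
  have hww : w ⬝ᵥ w = 1 := by
    have key : (ℓ ᵥ* U) ⬝ᵥ (Uᵀ *ᵥ ℓ) = 1 := by
      rw [dotProduct_mulVec, vecMul_vecMul, hUU, vecMul_one, hℓ]
    rw [hw]
    nth_rewrite 1 [mulVec_transpose]
    exact key
  rw [h1]
  have : w ⬝ᵥ (diagonal hA.eigenvalues *ᵥ w) ≤ lam * (w ⬝ᵥ w) := by
    simp only [dotProduct, mulVec_diagonal, Finset.mul_sum]
    apply Finset.sum_le_sum
    intro i _
    have h2 : w i * (hA.eigenvalues i * w i) = hA.eigenvalues i * (w i * w i) := by ring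
    rw [h2]
    exact mul_le_mul_of_nonneg_right (hub i) (mul_self_nonneg _) |>.trans_eq (by ring)
  rw [hww] at this
  simpa using this

private lemma unit_norm {v : Fin 3 → ℝ} (hv : v ≠ 0) :
    ((Real.sqrt (v ⬝ᵥ v))⁻¹ • v) ⬝ᵥ ((Real.sqrt (v ⬝ᵥ v))⁻¹ • v) = 1 := by
  have h0 : 0 < v ⬝ᵥ v := by
    rcases lt_or_eq_of_le (Finset.sum_nonneg fun i _ => mul_self_nonneg (v i) :
      (0:ℝ) ≤ v ⬝ᵥ v) with h | h
    · exact h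
    · exact absurd (dotProduct_self_eq_zero.mp h.symm) hv
  have hs : Real.sqrt (v ⬝ᵥ v) ≠ 0 := by positivity
  have hss : Real.sqrt (v ⬝ᵥ v) * Real.sqrt (v ⬝ᵥ v) = v ⬝ᵥ v :=
    Real.mul_self_sqrt h0.le
  rw [smul_dotProduct, dotProduct_smul, smul_eq_mul, smul_eq_mul, ← mul_assoc,
    ← mul_inv, hss]
  exact inv_mul_cancel₀ h0.ne'

/-- For a two-qubit state whose first marginal is maximally mixed (`x = 0`), the
supremum over pairs of unit vectors `k, ℓ` of `Tr(yᵀy·ℓᵀℓ + TℓᵀℓTᵀ·kᵀk)` equals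
the largest eigenvalue of `yᵀy + TᵀT`. -/
theorem stmt_11 (y : Fin 3 → ℝ) (T : Matrix (Fin 3) (Fin 3) ℝ) (lam : ℝ)
    (hlam : IsGreatest {μ : ℝ | ∃ v : Fin 3 → ℝ, v ≠ 0 ∧
      (vecMulVec y y + Tᵀ * T).mulVec v = μ • v} lam) :
    sSup {f : ℝ | ∃ k ℓ : Fin 3 → ℝ, k ⬝ᵥ k = 1 ∧ ℓ ⬝ᵥ ℓ = 1 ∧
        f = Matrix.trace (vecMulVec y y * vecMulVec ℓ ℓ +
          T * vecMulVec ℓ ℓ * Tᵀ * vecMulVec k k)} = lam := by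
  set A : Matrix (Fin 3) (Fin 3) ℝ := vecMulVec y y + Tᵀ * T with hAdef
  have hA : A.IsHermitian := by
    apply Matrix.IsHermitian.add
    · ext i j; simp [conjTranspose_apply, vecMulVec_apply, mul_comm]
    · simpa using isHermitian_conjTranspose_mul_self T
  have hub : ∀ i, hA.eigenvalues i ≤ lam := by
    intro i
    apply hlam.2
    refine ⟨(hA.eigenvectorBasis i : Fin 3 → ℝ), ?_, hA.mulVec_eigenvectorBasis i⟩
    have := hA.eigenvectorBasis.orthonormal.ne_zero i
    intro h
    apply this
    ext j
    exact congrFun h j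
  apply IsGreatest.csSup_eq
  constructor
  · -- lam is attained
    obtain ⟨v, hv0, hv⟩ := hlam.1
    set c : ℝ := (Real.sqrt (v ⬝ᵥ v))⁻¹ with hc
    set ℓ : Fin 3 → ℝ := c • v with hℓdef
    have hℓ : ℓ ⬝ᵥ ℓ = 1 := unit_norm hv0
    have hAℓ : A *ᵥ ℓ = lam • ℓ := by
      rw [hℓdef, mulVec_smul, hv, smul_comm]
    have hquad : (y ⬝ᵥ ℓ) ^ 2 + (T *ᵥ ℓ) ⬝ᵥ (T *ᵥ ℓ) = lam := by
      rw [← quad, hAℓ, dotProduct_smul, smul_eq_mul, hℓ, mul_one]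
    by_cases hu : T *ᵥ ℓ = 0
    · refine ⟨![1,0,0], ℓ, by simp [dotProduct, Fin.sum_univ_three], hℓ, ?_⟩
      rw [trace_eq, hu, zero_dotProduct]
      rw [hu, dotProduct_self_eq_zero.mpr rfl] at hquad
      linarith
    · set u : Fin 3 → ℝ := T *ᵥ ℓ with hudef
      set k : Fin 3 → ℝ := (Real.sqrt (u ⬝ᵥ u))⁻¹ • u with hk
      have hku : k ⬝ᵥ k = 1 := unit_norm hu
      refine ⟨k, ℓ, hku, hℓ, ?_⟩
      rw [trace_eq]
      have h0 : 0 < u ⬝ᵥ u := by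
        rcases lt_or_eq_of_le (Finset.sum_nonneg fun i _ => mul_self_nonneg (u i) :
          (0:ℝ) ≤ u ⬝ᵥ u) with h | h
        · exact h
        · exact absurd (dotProduct_self_eq_zero.mp h.symm) hu
      have huk : (u ⬝ᵥ k) ^ 2 = u ⬝ᵥ u := by
        have hss : Real.sqrt (u ⬝ᵥ u) * Real.sqrt (u ⬝ᵥ u) = u ⬝ᵥ u :=
          Real.mul_self_sqrt h0.le
        rw [hk, dotProduct_smul, smul_eq_mul, mul_pow, sq ((Real.sqrt (u ⬝ᵥ u))⁻¹),
          ← mul_inv, hss, sq (u ⬝ᵥ u), ← mul_assoc, inv_mul_cancel₀ h0.ne', one_mul]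
      rw [huk]
      exact hquad.symm
  · -- lam is an upper bound
    rintro f ⟨k, ℓ, hk, hℓ, rfl⟩
    rw [trace_eq]
    have hcs : ((T *ᵥ ℓ) ⬝ᵥ k) ^ 2 ≤ (T *ᵥ ℓ) ⬝ᵥ (T *ᵥ ℓ) := by
      have := Finset.sum_mul_sq_le_sq_mul_sq Finset.univ (fun i => (T *ᵥ ℓ) i) (fun i => k i)
      simp only [dotProduct] at *
      calc (∑ i, (T *ᵥ ℓ) i * k i) ^ 2 ≤ (∑ i, (T *ᵥ ℓ) i ^ 2) * ∑ i, k i ^ 2 := this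
        _ = (∑ i, (T *ᵥ ℓ) i * (T *ᵥ ℓ) i) * ∑ i, k i * k i := by
            simp only [sq]
        _ = (∑ i, (T *ᵥ ℓ) i * (T *ᵥ ℓ) i) := by rw [hk, mul_one]
    calc (y ⬝ᵥ ℓ) ^ 2 + ((T *ᵥ ℓ) ⬝ᵥ k) ^ 2
        ≤ (y ⬝ᵥ ℓ) ^ 2 + (T *ᵥ ℓ) ⬝ᵥ (T *ᵥ ℓ) := by linarith
      _ = ℓ ⬝ᵥ (A *ᵥ ℓ) := (quad y T ℓ).symm
      _ ≤ lam := rayleigh_le hA hub hℓ
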